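/- Let b : ℝᵈ → ℝᵈ be continuous with limsup_{|x|→∞} ⟨b(x), x⟩/|x| < -(3/2)‖κ‖_∞^{1/2} for a bounded continuous κ : ℝᵈ → [0,∞), and let V(x) = exp(‖κ‖_∞^{1/2} |x|). Then the generator L f = (1/2)Δf + ⟨b, ∇f⟩ satisfies: there exist ε > 0 and C ≥ 0 such that L V(x) ≤ -(‖κ‖_∞ + ε) V(x) + C for all x ∈ ℝᵈ (with V interpreted via a smooth modification near 0 if necessary, or the inequality required only for |x| bounded away from 0 with the remaining region absorbed in C). -/

import Mathlib

open Real

/-- Lyapunov property for the diffusion generator `L = (1/2)Δ + ⟨b, ∇⟩` with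
`V(x) = exp(‖κ‖_∞^{1/2} |x|)` under the drift condition
`limsup_{|x|→∞} ⟨b(x),x⟩/|x| < -(3/2)‖κ‖_∞^{1/2}`: there exist `ε > 0`, `C ≥ 0`
and `r > 0` such that for all `x` with `|x| ≥ r`,
`L V(x) = V(x)·[(1/2)(a² + a(d-1)/|x|) + a⟨b(x),x⟩/|x|] ≤ -(‖κ‖_∞+ε)V(x) + C`,
where `a = ‖κ‖_∞^{1/2}`. -/
theorem stmt_18 (d : ℕ)
    (b : EuclideanSpace ℝ (Fin d) → EuclideanSpace ℝ (Fin d)) (hb : Continuous b)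
    (κ : EuclideanSpace ℝ (Fin d) → ℝ) (hκcont : Continuous κ)
    (hκ0 : ∀ x, 0 ≤ κ x) (Knorm : ℝ) (hKnorm : Knorm = ⨆ x, κ x)
    (hκbdd : ∀ x, κ x ≤ Knorm) (hKnonneg : 0 ≤ Knorm)
    (hdrift : ∃ L : ℝ, L < -(3 / 2) * Real.sqrt Knorm ∧
      ∃ R₀ : ℝ, ∀ x, R₀ ≤ ‖x‖ → (inner ℝ (b x) x : ℝ) / ‖x‖ ≤ L) :
    ∃ ε > (0 : ℝ), ∃ C ≥ (0 : ℝ), ∃ r > (0 : ℝ),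
      ∀ x : EuclideanSpace ℝ (Fin d), r ≤ ‖x‖ →
        Real.exp (Real.sqrt Knorm * ‖x‖) *
            ((1 / 2) * (Knorm + Real.sqrt Knorm * ((d : ℝ) - 1) / ‖x‖)
              + Real.sqrt Knorm * ((inner ℝ (b x) x : ℝ) / ‖x‖))
          ≤ -(Knorm + ε) * Real.exp (Real.sqrt Knorm * ‖x‖) + C := by
  obtain ⟨L, hL, R₀, hR₀⟩ := hdrift
  set a : ℝ := Real.sqrt Knorm with ha
  have ha0 : 0 ≤ a := Real.sqrt_nonneg _
  have ha2 : a ^ 2 = Knorm := Real.sq_sqrt hKnonneg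
  rcases eq_or_lt_of_le hKnonneg with hK0 | hKpos
  · -- Knorm = 0
    have haz : a = 0 := by rw [ha, ← hK0, Real.sqrt_zero]
    refine ⟨1, one_pos, 1, zero_le_one, 1, one_pos, fun x hx => ?_⟩
    rw [haz, ← hK0]
    simp
  · -- 0 < Knorm, hence a > 0
    have hapos : 0 < a := Real.sqrt_pos.mpr hKpos
    have haL : a * L < -(3/2) * Knorm := by
      have := mul_lt_mul_of_pos_left hL hapos
      nlinarith
    set δ : ℝ := -(Knorm / 2 + a * L) - Knorm with hδ
    have hδpos : 0 < δ := by simp only [hδ]; nlinarith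
    set ε : ℝ := δ / 2 with hε
    have hεpos : 0 < ε := by positivity
    refine ⟨ε, hεpos, 0, le_refl 0, max (max R₀ 1) (a * d / ε), ?_, fun x hx => ?_⟩
    · exact lt_of_lt_of_le one_pos (le_trans (le_max_right _ _) (le_max_left _ _))
    · have hx1 : (1 : ℝ) ≤ ‖x‖ :=
        le_trans (le_trans (le_max_right _ _) (le_max_left _ _)) hx
      have hxpos : 0 < ‖x‖ := lt_of_lt_of_le one_pos hx1
      have hxR₀ : R₀ ≤ ‖x‖ :=
        le_trans (le_trans (le_max_left _ _) (le_max_left _ _)) hx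
      have hxad : a * d / ε ≤ ‖x‖ := le_trans (le_max_right _ _) hx
      have hinner : (inner ℝ (b x) x : ℝ) / ‖x‖ ≤ L := hR₀ x hxR₀
      have hdiv : a * (d : ℝ) / ‖x‖ ≤ ε := by
        rw [div_le_iff₀ hxpos]
        have := (div_le_iff₀ hεpos).mp hxad
        nlinarith
      have hdiv' : a * ((d : ℝ) - 1) / ‖x‖ ≤ ε := by
        refine le_trans ?_ hdiv
        gcongr
        nlinarith
      have hinner' : a * ((inner ℝ (b x) x : ℝ) / ‖x‖) ≤ a * L :=
        mul_le_mul_of_nonneg_left hinner ha0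
      have hB : (1 / 2) * (Knorm + a * ((d : ℝ) - 1) / ‖x‖)
          + a * ((inner ℝ (b x) x : ℝ) / ‖x‖) ≤ -(Knorm + ε) := by
        have : Knorm / 2 + a * L = -Knorm - δ := by simp only [hδ]; ring
        nlinarith
      have hexp : 0 < Real.exp (a * ‖x‖) := Real.exp_pos _
      have := mul_le_mul_of_nonneg_left hB hexp.le
      nlinarith
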